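/- arXiv:2401.13361 — 2 statements merged into one kernel-verified Lean document; each statement's English description precedes it below -/
import Mathlib

section
/- For θ ≥ 1/4, the DIRK stability function R(z) = (1 + (1-2θ)z + (1/2-2θ+θ²)z²)/(1-θz)² satisfies |R(z)| ≤ 1 for all z with Re z ≤ 0; i.e., the DIRK method is A-stable whenever θ ≥ 1/4. -/
set_option maxHeartbeats 1000000

/-- For `θ ≥ 1/4` the DIRK stability function satisfies `|R(z)| ≤ 1` for all `Re z ≤ 0`;
i.e. the DIRK method is A-stable whenever `θ ≥ 1/4`. -/
theorem dirk_A_stable (θ : ℝ) (hθ : 1 / 4 ≤ θ) :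
    ∀ z : ℂ, z.re ≤ 0 →
      ‖((1 + (1 - 2 * (θ : ℂ)) * z + (1/2 - 2 * (θ : ℂ) + (θ : ℂ) ^ 2) * z ^ 2) /
          (1 - (θ : ℂ) * z) ^ 2)‖ ≤ 1 := by
  intro z hz
  set x := z.re with hx
  set y := z.im with hy
  have hθ0 : (0:ℝ) < θ := by linarith
  have hDne : (1 - (θ : ℂ) * z) ^ 2 ≠ 0 := by
    apply pow_ne_zero
    intro h
    have h1 : (θ : ℂ) * z = 1 := by
      have := sub_eq_zero.mp h
      linear_combination -this
    have hre : θ * x = 1 := by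
      have := congrArg Complex.re h1
      simpa using this
    nlinarith
  have hDpos : 0 < ‖(1 - (θ : ℂ) * z) ^ 2‖ :=
    norm_pos_iff.mpr hDne
  rw [norm_div, div_le_one hDpos]
  have hc : (1:ℂ)/2 - 2*(θ:ℂ) + (θ:ℂ)^2 = ((1/2 - 2*θ + θ^2 : ℝ):ℂ) := by
    push_cast; ring
  have hb : (1:ℂ) - 2*(θ:ℂ) = ((1 - 2*θ : ℝ):ℂ) := by push_cast; ring
  rw [hc, hb]
  have key : Complex.normSq (1 + ((1 - 2*θ : ℝ):ℂ) * z + ((1/2 - 2*θ + θ^2 : ℝ):ℂ) * z ^ 2)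
      ≤ Complex.normSq ((1 - (θ : ℂ) * z) ^ 2) := by
    simp only [Complex.normSq_apply, Complex.add_re, Complex.add_im, Complex.mul_re,
      Complex.mul_im, Complex.sub_re, Complex.sub_im, Complex.one_re, Complex.one_im,
      Complex.ofReal_re, Complex.ofReal_im, pow_two, ← hx, ← hy]
    have h1 : 0 ≤ (θ - 1/4) * (2*θ - 1)^2 * (x^4 + y^4) :=
      mul_nonneg (mul_nonneg (by linarith) (sq_nonneg _)) (by positivity)
    have h2 : 0 ≤ -x * (10*θ^2 - 6*θ + 1) * (x^2 + y^2) := by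
      apply mul_nonneg
      · apply mul_nonneg (by linarith)
        nlinarith [sq_nonneg (10*θ - 3)]
      · positivity
    have h3 : 0 ≤ -2*x := by linarith
    have h4 : 0 ≤ x^2 * (8*θ - 2) := mul_nonneg (sq_nonneg x) (by linarith)
    have h5 : 0 ≤ 2 * (θ - 1/4) * (2*θ - 1)^2 * (x^2 * y^2) := by
      apply mul_nonneg (mul_nonneg (by linarith) (sq_nonneg _)) (by positivity)
    nlinarith [h1, h2, h3, h4, h5]
  calc ‖1 + ((1 - 2*θ : ℝ):ℂ) * z + ((1/2 - 2*θ + θ^2 : ℝ):ℂ) * z ^ 2‖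
      = Real.sqrt (Complex.normSq _) := Complex.norm_def _
    _ ≤ Real.sqrt (Complex.normSq ((1 - (θ : ℂ) * z) ^ 2)) := Real.sqrt_le_sqrt key
    _ = ‖_‖ := (Complex.norm_def _).symm
end

section
/- Let A be an M×M real matrix, U₀ ∈ ℝ^M, ρ > 0, and let U_ρ : [0,T] → ℝ^M solve the penalized ODE U' = AU + ρ max(U₀ - U, 0) with U(0) = U₀ (componentwise max). Then for every t ∈ [0,T] and every component l, the complementarity-defect is controlled: U_{ρ,l}(t) ≥ U_{0,l} - C/ρ for a constant C depending only on A, U₀ and T (independent of ρ). -/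
open Set Real Finset

private lemma my_gronwallBound_mono {K ε : ℝ} (hK : 0 < K) (hε : 0 ≤ ε) {x y : ℝ}
    (hxy : x ≤ y) : gronwallBound 0 K ε x ≤ gronwallBound 0 K ε y := by
  rw [gronwallBound_of_K_ne_0 hK.ne']
  have h1 : Real.exp (K * x) ≤ Real.exp (K * y) :=
    Real.exp_le_exp.2 (mul_le_mul_of_nonneg_left hxy hK.le)
  have h2 : 0 ≤ ε / K := div_nonneg hε hK.le
  simp only [zero_mul, zero_add]
  nlinarith

private lemma my_gronwallBound_nonneg {K ε : ℝ} (hK : 0 < K) (hε : 0 ≤ ε) {x : ℝ}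
    (hx : 0 ≤ x) : 0 ≤ gronwallBound 0 K ε x := by
  have := my_gronwallBound_mono hK hε hx
  rwa [gronwallBound_x0] at this

set_option maxHeartbeats 1000000 in
/-- For the penalized ODE `U' = AU + ρ max(U₀ - U, 0)` with `U(0) = U₀`, the constraint
violation is `O(1/ρ)`: there is a constant `C` (depending only on `A`, `U₀`, `T`) with
`U_{ρ,l}(t) ≥ U_{0,l} - C/ρ` for all `t ∈ [0,T]`, `l`, and all `ρ > 0`. -/
theorem penalty_defect_bound (M : ℕ) (A : Matrix (Fin M) (Fin M) ℝ)
    (U₀ : Fin M → ℝ) (T : ℝ) (hT : 0 < T) :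
    ∃ C : ℝ, ∀ ρ : ℝ, 0 < ρ → ∀ U : ℝ → Fin M → ℝ,
      (∀ t ∈ Set.Icc (0 : ℝ) T,
        HasDerivAt U (A.mulVec (U t) + ρ • fun l => max (U₀ l - U t l) 0) t) →
      U 0 = U₀ →
      ∀ t ∈ Set.Icc (0 : ℝ) T, ∀ l : Fin M, U t l ≥ U₀ l - C / ρ := by
  classical
  set F : ℝ := ∑ l : Fin M, ∑ k : Fin M, (A l k) ^ 2 with hFdef
  set S₀ : ℝ := ∑ l : Fin M, (U₀ l) ^ 2 with hS₀def
  have hF : 0 ≤ F := Finset.sum_nonneg fun l _ =>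
    Finset.sum_nonneg fun k _ => sq_nonneg _
  have hS : 0 ≤ S₀ := Finset.sum_nonneg fun l _ => sq_nonneg _
  set K : ℝ := 1 + 2 * F with hKdef
  have hK : 0 < K := by positivity
  set ε : ℝ := 2 * F * S₀ with hεdef
  have hε : 0 ≤ ε := by positivity
  set G : ℝ := gronwallBound 0 K ε T with hGdef
  have hG : 0 ≤ G := my_gronwallBound_nonneg hK hε hT.le
  set C : ℝ := Real.sqrt (F * (2 * G + 2 * S₀)) with hCdef
  have hC : 0 ≤ C := Real.sqrt_nonneg _
  refine ⟨C, ?_⟩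
  intro ρ hρ U hU hU0
  -- componentwise derivative
  have hder : ∀ t ∈ Set.Icc (0 : ℝ) T, ∀ l : Fin M,
      HasDerivAt (fun s => U s l)
        ((A.mulVec (U t)) l + ρ * max (U₀ l - U t l) 0) t := by
    intro t ht l
    have := hasDerivAt_pi.1 (hU t ht) l
    simpa [smul_eq_mul] using this
  -- the squared distance function
  set f : ℝ → ℝ := fun t => ∑ l : Fin M, (U t l - U₀ l) ^ 2 with hfdef
  set f' : ℝ → ℝ := fun t => ∑ l : Fin M,
      2 * (U t l - U₀ l) * ((A.mulVec (U t)) l + ρ * max (U₀ l - U t l) 0) with hf'def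
  have hf' : ∀ t ∈ Set.Icc (0 : ℝ) T, HasDerivAt f (f' t) t := by
    intro t ht
    apply HasDerivAt.fun_sum
    intro l _
    have h := ((hder t ht l).sub_const (U₀ l)).fun_pow 2
    refine h.congr_deriv ?_
    push_cast
    ring_nf
  have hfc : ContinuousOn f (Set.Icc 0 T) := fun t ht =>
    ((hf' t ht).continuousAt).continuousWithinAt
  -- bound on Q := ∑ (U t k)^2
  have hQ : ∀ t : ℝ, (∑ k : Fin M, (U t k) ^ 2) ≤ 2 * f t + 2 * S₀ := by
    intro t
    have : (∑ k : Fin M, (U t k) ^ 2)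
        ≤ ∑ k : Fin M, (2 * (U t k - U₀ k) ^ 2 + 2 * (U₀ k) ^ 2) := by
      refine Finset.sum_le_sum fun k _ => ?_
      nlinarith [sq_nonneg (U t k - 2 * U₀ k)]
    simpa [Finset.sum_add_distrib, Finset.mul_sum, hfdef, hS₀def] using this
  -- bound on rows of A·U
  have hAUsq : ∀ t : ℝ, ∀ l : Fin M,
      ((A.mulVec (U t)) l) ^ 2 ≤ (∑ k : Fin M, (A l k) ^ 2) * ∑ k : Fin M, (U t k) ^ 2 := by
    intro t l
    simpa [Matrix.mulVec, dotProduct] using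
      Finset.sum_mul_sq_le_sq_mul_sq Finset.univ (fun k => A l k) (fun k => U t k)
  -- Gronwall bound on f
  have hfG : ∀ t ∈ Set.Icc (0 : ℝ) T, f t ≤ G := by
    have bound : ∀ t ∈ Set.Ico (0 : ℝ) T, f' t ≤ K * f t + ε := by
      intro t ht
      have h1 : f' t ≤ f t + ∑ l : Fin M, ((A.mulVec (U t)) l) ^ 2 := by
        have : f' t ≤ ∑ l : Fin M, ((U t l - U₀ l) ^ 2 + ((A.mulVec (U t)) l) ^ 2) := by
          refine Finset.sum_le_sum fun l _ => ?_
          have hdm : (U t l - U₀ l) * max (U₀ l - U t l) 0 ≤ 0 := by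
            rcases le_or_gt (U₀ l - U t l) 0 with h | h
            · rw [max_eq_right h]; simp
            · rw [max_eq_left h.le]; nlinarith
          nlinarith [two_mul_le_add_sq (U t l - U₀ l) ((A.mulVec (U t)) l),
            mul_nonpos_of_nonneg_of_nonpos hρ.le hdm]
        simpa [Finset.sum_add_distrib, hfdef] using this
      have h2 : (∑ l : Fin M, ((A.mulVec (U t)) l) ^ 2)
          ≤ F * ∑ k : Fin M, (U t k) ^ 2 := by
        calc (∑ l : Fin M, ((A.mulVec (U t)) l) ^ 2)
            ≤ ∑ l : Fin M, (∑ k : Fin M, (A l k) ^ 2) * ∑ k : Fin M, (U t k) ^ 2 :=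
              Finset.sum_le_sum fun l _ => hAUsq t l
          _ = F * ∑ k : Fin M, (U t k) ^ 2 := by rw [hFdef, Finset.sum_mul]
      have h3 := hQ t
      have h4 : F * (∑ k : Fin M, (U t k) ^ 2) ≤ F * (2 * f t + 2 * S₀) :=
        mul_le_mul_of_nonneg_left h3 hF
      have hf0 : 0 ≤ f t := Finset.sum_nonneg fun l _ => sq_nonneg _
      rw [hKdef, hεdef]; nlinarith
    have ha : f 0 ≤ 0 := by simp [f, hU0]
    intro t ht
    have := le_gronwallBound_of_liminf_deriv_right_le hfc
      (fun x hx r hr =>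
        ((hf' x (Set.Ico_subset_Icc_self hx)).hasDerivWithinAt.liminf_right_slope_le hr))
      ha bound t ht
    rw [sub_zero] at this
    exact this.trans (my_gronwallBound_mono hK hε ht.2)
  -- uniform bound on the rows of A·U
  have hAU : ∀ t ∈ Set.Icc (0 : ℝ) T, ∀ l : Fin M, |(A.mulVec (U t)) l| ≤ C := by
    intro t ht l
    have h1 : ((A.mulVec (U t)) l) ^ 2 ≤ F * (2 * G + 2 * S₀) := by
      have h2 := hAUsq t l
      have hrow : (∑ k : Fin M, (A l k) ^ 2) ≤ F := by
        rw [hFdef]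
        exact Finset.single_le_sum (f := fun l => ∑ k : Fin M, (A l k) ^ 2)
          (fun i _ => Finset.sum_nonneg fun k _ => sq_nonneg _) (Finset.mem_univ l)
      have hq := hQ t
      have hfg := hfG t ht
      have hQnn : 0 ≤ ∑ k : Fin M, (U t k) ^ 2 := Finset.sum_nonneg fun k _ => sq_nonneg _
      calc ((A.mulVec (U t)) l) ^ 2
          ≤ (∑ k : Fin M, (A l k) ^ 2) * ∑ k : Fin M, (U t k) ^ 2 := h2
        _ ≤ F * ∑ k : Fin M, (U t k) ^ 2 := mul_le_mul_of_nonneg_right hrow hQnn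
        _ ≤ F * (2 * f t + 2 * S₀) := mul_le_mul_of_nonneg_left hq hF
        _ ≤ F * (2 * G + 2 * S₀) := mul_le_mul_of_nonneg_left (by linarith) hF
    calc |(A.mulVec (U t)) l| = Real.sqrt (((A.mulVec (U t)) l) ^ 2) :=
          (Real.sqrt_sq_eq_abs _).symm
      _ ≤ C := by rw [hCdef]; exact Real.sqrt_le_sqrt h1
  -- second Gronwall: componentwise defect
  intro t ht l
  set ψ : ℝ → ℝ := fun s => U₀ l - U s l with hψdef
  set ψ' : ℝ → ℝ := fun s => -((A.mulVec (U s)) l + ρ * max (U₀ l - U s l) 0) with hψ'def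
  have hψ : ∀ s ∈ Set.Icc (0 : ℝ) T, HasDerivAt ψ (ψ' s) s := fun s hs =>
    (hder s hs l).const_sub (U₀ l)
  have hψc : ContinuousOn ψ (Set.Icc 0 T) := fun s hs =>
    ((hψ s hs).continuousAt).continuousWithinAt
  have bound2 : ∀ s ∈ Set.Ico (0 : ℝ) T, ψ' s ≤ (-ρ) * ψ s + C := by
    intro s hs
    have h1 : |(A.mulVec (U s)) l| ≤ C := hAU s (Set.Ico_subset_Icc_self hs) l
    have h2 : ψ s ≤ max (U₀ l - U s l) 0 := le_max_left _ _
    have h3 : ρ * ψ s ≤ ρ * max (U₀ l - U s l) 0 := mul_le_mul_of_nonneg_left h2 hρ.le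
    have h4 : -((A.mulVec (U s)) l) ≤ C := (neg_le_abs _).trans h1
    rw [hψ'def]
    simp only
    linarith
  have hψ0 : ψ 0 ≤ 0 := by simp [ψ, hU0]
  have hG2 := le_gronwallBound_of_liminf_deriv_right_le hψc
    (fun x hx r hr =>
      ((hψ x (Set.Ico_subset_Icc_self hx)).hasDerivWithinAt.liminf_right_slope_le hr))
    hψ0 bound2 t ht
  rw [sub_zero] at hG2
  have hfinal : gronwallBound 0 (-ρ) C t ≤ C / ρ := by
    rw [gronwallBound_of_K_ne_0 (neg_ne_zero.2 hρ.ne')]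
    have he : 0 < Real.exp (-ρ * t) := Real.exp_pos _
    have hCρ : 0 ≤ C / ρ := div_nonneg hC hρ.le
    have : C / -ρ = -(C / ρ) := by rw [div_neg]
    rw [this]
    nlinarith
  have : ψ t ≤ C / ρ := hG2.trans hfinal
  simp only [hψdef] at this
  linarith
end
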